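/- Let Ξ be the linear map on real polynomials in d variables defined on monomials by Ξ(x_1^{k_1}···x_d^{k_d}) = P_{k_1}(x_1)···P_{k_d}(x_d), where P_k(x) = ∏_{j=-(k-1)/2}^{(k-1)/2}(x+j). If ψ ∈ ℝ[x_1,...,x_d] is harmonic (i.e., Δψ = 0 as a polynomial), then Ξ(ψ) is discrete harmonic on ℤ^d, i.e., ∑_{i=1}^d [Ξψ(x+e_i) - 2Ξψ(x) + Ξψ(x-e_i)] = 0 for all x ∈ ℤ^d. -/

import Mathlib

open MvPolynomial

/-- `P k x = ∏_{j=-(k-1)/2}^{(k-1)/2} (x + j)`. -/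
noncomputable def P (k : ℕ) (x : ℝ) : ℝ :=
  ∏ j ∈ Finset.range k, (x + (j : ℝ) - ((k : ℝ) - 1) / 2)

/-- The evaluation of `Ξ(ψ)` at a point `x`, where `Ξ` is the linear map sending the
monomial `x₁^{k₁} ⋯ x_d^{k_d}` to `P_{k₁}(x₁) ⋯ P_{k_d}(x_d)`. -/
noncomputable def XiEval {d : ℕ} (ψ : MvPolynomial (Fin d) ℝ) (x : Fin d → ℝ) : ℝ :=
  ∑ m ∈ ψ.support, ψ.coeff m * ∏ i, P (m i) (x i)

lemma P_delta (k : ℕ) (x : ℝ) :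
    P (k+1) (x+1) - P (k+1) x = ((k:ℝ)+1) * P k (x + 1/2) := by
  set Q : ℝ := ∏ j ∈ Finset.range k, (x + (j:ℝ) + 1 - (k:ℝ)/2) with hQ
  have h1 : P (k+1) (x+1) = Q * (x + (k:ℝ) + 1 - (k:ℝ)/2) := by
    rw [P, Finset.prod_range_succ, hQ]
    congr 1
    · exact Finset.prod_congr rfl fun j _ => by push_cast; ring
    · push_cast; ring
  have h2 : P (k+1) x = Q * (x - (k:ℝ)/2) := by
    rw [P, Finset.prod_range_succ', hQ]
    congr 1
    · exact Finset.prod_congr rfl fun j _ => by push_cast; ring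
    · push_cast; ring
  have h3 : P k (x + 1/2) = Q := by
    rw [P, hQ]
    exact Finset.prod_congr rfl fun j _ => by push_cast; ring
  rw [h1, h2, h3]; ring

lemma P_dd (k : ℕ) (x : ℝ) :
    P k (x+1) - 2 * P k x + P k (x-1) = (k:ℝ) * ((k:ℝ) - 1) * P (k-2) x := by
  match k with
  | 0 => norm_num [P]
  | 1 => simp [P]; ring
  | (m+2) =>
    have a1 := P_delta (m+1) x
    have a2 := P_delta (m+1) (x-1)
    have a3 := P_delta m (x - 1/2)
    have e1 : x - 1 + 1 = x := by ring
    have e2 : x - 1/2 + 1 = x + 1/2 := by ring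
    have e3 : x - 1/2 + (1:ℝ)/2 = x := by ring
    have e4 : x - 1 + (1:ℝ)/2 = x - 1/2 := by ring
    rw [e1, e4] at a2
    rw [e2, e3] at a3
    have hm : m + 1 + 1 = m + 2 := rfl
    rw [hm] at a1 a2
    have hk : m + 2 - 2 = m := rfl
    rw [hk]
    push_cast at a1 a2 a3 ⊢
    linear_combination a1 - a2 + ((m:ℝ)+1+1) * a3

lemma XiEval_eq_sum {d : ℕ} (ψ : MvPolynomial (Fin d) ℝ) (x : Fin d → ℝ) :
    XiEval ψ x = (AddMonoidAlgebra.coeff ψ).sum (fun m c => c * ∏ i, P (m i) (x i)) := rfl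

lemma XiEval_add {d : ℕ} (p q : MvPolynomial (Fin d) ℝ) (x : Fin d → ℝ) :
    XiEval (p + q) x = XiEval p x + XiEval q x := by
  simp only [XiEval_eq_sum, AddMonoidAlgebra.coeff_add]
  exact Finsupp.sum_add_index' (fun m => by simp) (fun m c1 c2 => by ring)

lemma XiEval_zero {d : ℕ} (x : Fin d → ℝ) : XiEval (0 : MvPolynomial (Fin d) ℝ) x = 0 := by
  simp [XiEval]

noncomputable def XiHom {d : ℕ} (x : Fin d → ℝ) : MvPolynomial (Fin d) ℝ →+ ℝ where
  toFun ψ := XiEval ψ x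
  map_zero' := XiEval_zero x
  map_add' p q := XiEval_add p q x

lemma XiEval_monomial {d : ℕ} (m : Fin d →₀ ℕ) (c : ℝ) (x : Fin d → ℝ) :
    XiEval (monomial m c) x = c * ∏ i, P (m i) (x i) := by
  rw [XiEval_eq_sum]
  exact sum_monomial_eq (by simp)

lemma XiEval_dd {d : ℕ} (ψ : MvPolynomial (Fin d) ℝ) (i : Fin d) (y : Fin d → ℝ) :
    XiEval ψ (fun j => y j + if j = i then 1 else 0) - 2 * XiEval ψ y
      + XiEval ψ (fun j => y j - if j = i then 1 else 0)
    = XiEval (pderiv i (pderiv i ψ)) y := by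
  induction ψ using MvPolynomial.induction_on' with
  | add p q hp hq =>
    rw [map_add, map_add]
    simp only [XiEval_add]
    rw [← hp, ← hq]; ring
  | monomial m c =>
    classical
    rw [pderiv_monomial, pderiv_monomial, XiEval_monomial, XiEval_monomial,
      XiEval_monomial, XiEval_monomial]
    set R : ℝ := ∏ j ∈ Finset.univ.erase i, P (m j) (y j) with hR
    have h1 : (∏ j, P (m j) (y j + if j = i then 1 else 0)) = P (m i) (y i + 1) * R := by
      rw [← Finset.mul_prod_erase Finset.univ _ (Finset.mem_univ i), if_pos rfl, hR]
      congr 1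
      exact Finset.prod_congr rfl fun j hj => by
        rw [if_neg (Finset.ne_of_mem_erase hj), add_zero]
    have h2 : (∏ j, P (m j) (y j)) = P (m i) (y i) * R := by
      rw [← Finset.mul_prod_erase Finset.univ _ (Finset.mem_univ i), hR]
    have h3 : (∏ j, P (m j) (y j - if j = i then 1 else 0)) = P (m i) (y i - 1) * R := by
      rw [← Finset.mul_prod_erase Finset.univ _ (Finset.mem_univ i), if_pos rfl, hR]
      congr 1
      exact Finset.prod_congr rfl fun j hj => by
        rw [if_neg (Finset.ne_of_mem_erase hj), sub_zero]
    have h4 : (∏ j, P (((m - Finsupp.single i 1 - Finsupp.single i 1 : Fin d →₀ ℕ) j)) (y j))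
        = P (m i - 2) (y i) * R := by
      rw [← Finset.mul_prod_erase Finset.univ _ (Finset.mem_univ i), hR]
      congr 1
      · have hi : ((m - Finsupp.single i 1 - Finsupp.single i 1 : Fin d →₀ ℕ) i) = m i - 2 := by
          simp only [Finsupp.tsub_apply, Finsupp.single_apply]
          simp
          omega
        rw [hi]
      · exact Finset.prod_congr rfl fun j hj => by
          have hji : j ≠ i := Finset.ne_of_mem_erase hj
          have hj2 : ((m - Finsupp.single i 1 - Finsupp.single i 1 : Fin d →₀ ℕ) j) = m j := by
            simp [Finsupp.tsub_apply, Finsupp.single_apply, Ne.symm hji]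
          rw [hj2]
    have h5 : ((m - Finsupp.single i 1 : Fin d →₀ ℕ) i : ℕ) = m i - 1 := by
      simp [Finsupp.tsub_apply, Finsupp.single_apply]
    rw [h1, h2, h3, h4, h5]
    have hdd := P_dd (m i) (y i)
    rcases Nat.eq_zero_or_pos (m i) with h | h
    · simp only [h] at hdd ⊢
      push_cast at hdd ⊢
      linear_combination c * R * hdd
    · have hc : ((m i - 1 : ℕ) : ℝ) = (m i : ℝ) - 1 := by
        push_cast [h]; ring
      rw [hc]
      linear_combination c * R * hdd

/-- If `ψ` is a harmonic polynomial on `ℝ^d`, then `Ξ(ψ)` is discrete harmonic on `ℤ^d`: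
`∑_i [Ξψ(x+eᵢ) - 2 Ξψ(x) + Ξψ(x-eᵢ)] = 0` for all `x ∈ ℤ^d`. -/
theorem stmt2 {d : ℕ} (ψ : MvPolynomial (Fin d) ℝ)
    (hharm : ∑ i, pderiv i (pderiv i ψ) = 0) (x : Fin d → ℤ) :
    ∑ i, (XiEval ψ (fun j => (x j : ℝ) + if j = i then 1 else 0)
        - 2 * XiEval ψ (fun j => (x j : ℝ))
        + XiEval ψ (fun j => (x j : ℝ) - if j = i then 1 else 0)) = 0 := by
  have h2 : ∑ i, XiEval (pderiv i (pderiv i ψ)) (fun j => (x j : ℝ)) = 0 := by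
    have hm := map_sum (XiHom (fun j => (x j : ℝ)))
      (fun i => pderiv i (pderiv i ψ)) Finset.univ
    simp only [XiHom, AddMonoidHom.coe_mk, ZeroHom.coe_mk] at hm
    rw [← hm, hharm, XiEval_zero]
  exact (Finset.sum_congr rfl fun i _ => XiEval_dd ψ i (fun j => (x j : ℝ))).trans h2
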